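/- Consider i.i.d. letters from a finite alphabet {x_1,...,x_K} with probabilities α_1 > α_2 > ... > α_K > 0, Σα_i = 1, and the order x_1 < x_2 < ... < x_K with all letters 'even'. Apply RSK row-insertion to the first n letters and let ξ_k(n) denote the number of letters x_k (k ≥ 2) in the first row of the resulting tableau after n insertions. Then the process ξ_k(n) is stochastically dominated by the random walk Ψ_{α_{k-1},α_k}(n) on {0,1,2,...} (right with probability α_k, left with probability α_{k-1}, started at 0), and hence sup_n E[ξ_k(n)] < ∞. -/

import Mathlib

open MeasureTheory ProbabilityTheory

/-- Schensted row-insertion of a letter `x` into a (weakly increasing) first row, for an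
alphabet of even letters: `x` bumps the leftmost entry strictly greater than `x` (which is
discarded, since we only track the first row), or is appended at the end. -/
def rowInsert {K : ℕ} (x : Fin K) : List (Fin K) → List (Fin K)
  | [] => [x]
  | y :: ys => if x < y then x :: ys else y :: rowInsert x ys

/-- The first row of the RSK tableau of a word. -/
def firstRow {K : ℕ} (w : List (Fin K)) : List (Fin K) :=
  w.foldl (fun r x => rowInsert x r) ([] : List (Fin K))

namespace Stmt14Aux

variable {K : ℕ}

lemma mem_rowInsert {x z : Fin K} {r : List (Fin K)} (h : z ∈ rowInsert x r) :
    z = x ∨ z ∈ r := by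
  induction r with
  | nil => simpa [rowInsert] using h
  | cons y ys ih =>
    rw [rowInsert] at h
    by_cases hxy : x < y
    · rw [if_pos hxy] at h
      rcases List.mem_cons.1 h with h | h
      · exact Or.inl h
      · exact Or.inr (List.mem_cons_of_mem _ h)
    · rw [if_neg hxy] at h
      rcases List.mem_cons.1 h with h | h
      · exact Or.inr (by simp [h])
      · rcases ih h with h | h
        · exact Or.inl h
        · exact Or.inr (List.mem_cons_of_mem _ h)

lemma sorted_rowInsert (x : Fin K) {r : List (Fin K)} (h : r.Pairwise (· ≤ ·)) :
    (rowInsert x r).Pairwise (· ≤ ·) := by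
  induction r with
  | nil => simp [rowInsert]
  | cons y ys ih =>
    rw [List.pairwise_cons] at h
    obtain ⟨hy, hs⟩ := h
    rw [rowInsert]
    by_cases hxy : x < y
    · rw [if_pos hxy, List.pairwise_cons]
      exact ⟨fun z hz => le_trans hxy.le (hy z hz), hs⟩
    · rw [if_neg hxy, List.pairwise_cons]
      refine ⟨fun z hz => ?_, ih hs⟩
      rcases mem_rowInsert hz with rfl | hz
      · exact not_lt.1 hxy
      · exact hy z hz

lemma count_rowInsert_le (x k : Fin K) (r : List (Fin K)) :
    (rowInsert x r).count k ≤ r.count k + (if x = k then 1 else 0) := by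
  induction r with
  | nil => simp [rowInsert, List.count_cons, List.count_nil]
  | cons y ys ih =>
    rw [rowInsert]
    by_cases hxy : x < y
    · rw [if_pos hxy]
      simp only [List.count_cons, beq_iff_eq]
      split_ifs <;> omega
    · rw [if_neg hxy]
      simp only [List.count_cons, beq_iff_eq] at ih ⊢
      split_ifs at ih ⊢ <;> omega

lemma count_rowInsert_bump {k k1 : Fin K} (hk : (k1 : ℕ) + 1 = (k : ℕ)) {r : List (Fin K)}
    (hs : r.Pairwise (· ≤ ·)) :
    (rowInsert k1 r).count k ≤ r.count k - 1 := by
  have hne : k1 ≠ k := fun h => by rw [h] at hk; omega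
  induction r with
  | nil => simp [rowInsert, List.count_cons, hne]
  | cons y ys ih =>
    rw [List.pairwise_cons] at hs
    obtain ⟨hy, hs'⟩ := hs
    rw [rowInsert]
    by_cases h1 : k1 < y
    · rw [if_pos h1]
      by_cases hyk : y = k
      · subst hyk
        simp [List.count_cons, hne]
      · have hky : (k : ℕ) < (y : ℕ) := by
          have := (Fin.lt_def.1 h1)
          have : (k1 : ℕ) < (y : ℕ) := this
          have hne2 : (y : ℕ) ≠ (k : ℕ) := fun h => hyk (Fin.ext h)
          omega
        have hcnt : ys.count k = 0 := by
          rw [List.count_eq_zero]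
          intro hmem
          have := hy k hmem
          have := Fin.le_def.1 this
          omega
        simp only [List.count_cons, beq_iff_eq, hcnt]
        split_ifs <;> omega
    · rw [if_neg h1]
      have hyk : y ≠ k := by
        intro h
        subst h
        exact h1 (Fin.lt_def.2 (by omega))
      simp only [List.count_cons, beq_iff_eq]
      have := ih hs'
      split_ifs <;> omega

/-- One step of the reflected walk driven by letters. -/
def step (k k1 x : Fin K) (v : ℕ) : ℕ :=
  if x = k then v + 1 else if x = k1 then v - 1 else v

lemma step_le (k k1 x : Fin K) (v : ℕ) : step k k1 x v ≤ v + 1 := by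
  unfold step; split_ifs <;> omega

lemma count_le_walk {k k1 : Fin K} (hk : (k1 : ℕ) + 1 = (k : ℕ)) (l : List (Fin K)) :
    ∀ (r : List (Fin K)) (v : ℕ), r.Pairwise (· ≤ ·) → r.count k ≤ v →
      (l.foldl (fun r x => rowInsert x r) r).count k ≤ l.foldl (fun v x => step k k1 x v) v := by
  have hne : k1 ≠ k := fun h => by rw [h] at hk; omega
  induction l with
  | nil => intro r v _ h; simpa using h
  | cons x l ih =>
    intro r v hs hle
    simp only [List.foldl_cons]
    refine ih _ _ (sorted_rowInsert x hs) ?_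
    unfold step
    by_cases h1 : x = k
    · rw [if_pos h1]
      have := count_rowInsert_le x k r
      rw [if_pos h1] at this
      omega
    · rw [if_neg h1]
      by_cases h2 : x = k1
      · rw [if_pos h2]
        subst h2
        have := count_rowInsert_bump hk hs
        omega
      · rw [if_neg h2]
        have := count_rowInsert_le x k r
        rw [if_neg h1] at this
        omega

lemma sorted_foldl (l : List (Fin K)) :
    ∀ r : List (Fin K), r.Pairwise (· ≤ ·) →
      (l.foldl (fun r x => rowInsert x r) r).Pairwise (· ≤ ·) := by
  induction l with
  | nil => intro r h; simpa using h
  | cons x l ih => intro r h; exact ih _ (sorted_rowInsert x h)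

/-- The walk value after reading a word of length `n`. -/
def phi (k k1 : Fin K) (n : ℕ) (w : Fin n → Fin K) : ℕ :=
  (List.ofFn w).foldl (fun v x => step k k1 x v) 0

lemma count_firstRow_le_phi {k k1 : Fin K} (hk : (k1 : ℕ) + 1 = (k : ℕ)) (n : ℕ)
    (w : Fin n → Fin K) :
    (firstRow (List.ofFn w)).count k ≤ phi k k1 n w :=
  count_le_walk hk (List.ofFn w) ([] : List (Fin K)) 0 List.Pairwise.nil (le_refl 0)

lemma phi_le (k k1 : Fin K) (n : ℕ) (w : Fin n → Fin K) : phi k k1 n w ≤ n := by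
  have key : ∀ (l : List (Fin K)) (v : ℕ),
      l.foldl (fun v x => step k k1 x v) v ≤ v + l.length := by
    intro l
    induction l with
    | nil => intro v; simp
    | cons x l ih =>
      intro v
      simp only [List.foldl_cons, List.length_cons]
      have h1 := ih (step k k1 x v)
      have h2 := step_le k k1 x v
      omega
  have := key (List.ofFn w) 0
  simpa [phi] using this

lemma phi_snoc (k k1 : Fin K) (n : ℕ) (w : Fin n → Fin K) (x : Fin K) :
    phi k k1 (n + 1) (Fin.snoc w x) = step k k1 x (phi k k1 n w) := by
  unfold phi
  rw [List.ofFn_succ']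
  have h1 : (List.ofFn fun i : Fin n => (Fin.snoc w x : Fin (n+1) → Fin K) (Fin.castSucc i))
      = List.ofFn w := by
    congr 1
    funext i
    exact Fin.snoc_castSucc _ _ _
  rw [h1, Fin.snoc_last, List.concat_eq_append, List.foldl_concat]

open Classical in
/-- Weighted count of words whose walk value satisfies `c`. -/
noncomputable def A (α : Fin K → ℝ) (k k1 : Fin K) (n : ℕ) (c : ℕ → Prop) : ℝ :=
  ∑ w : Fin n → Fin K, if c (phi k k1 n w) then ∏ t, α (w t) else 0

variable {α : Fin K → ℝ} {k k1 : Fin K}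

lemma A_nonneg (hpos : ∀ i, 0 < α i) (n : ℕ) (c : ℕ → Prop) : 0 ≤ A α k k1 n c := by
  apply Finset.sum_nonneg
  intro w _
  split_ifs
  · exact Finset.prod_nonneg fun t _ => (hpos _).le
  · exact le_refl 0

lemma A_congr (n : ℕ) {c c' : ℕ → Prop} (h : ∀ v, c v ↔ c' v) :
    A α k k1 n c = A α k k1 n c' := by
  unfold A
  refine Finset.sum_congr rfl fun w _ => ?_
  by_cases hc : c (phi k k1 n w)
  · rw [if_pos hc, if_pos ((h _).1 hc)]
  · rw [if_neg hc, if_neg (fun hc' => hc ((h _).2 hc'))]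

lemma A_zero (c : ℕ → Prop) [Decidable (c 0)] : A α k k1 0 c = if c 0 then 1 else 0 := by
  unfold A
  rw [Fintype.sum_unique]
  have : phi k k1 0 default = 0 := rfl
  rw [this]
  simp

lemma A_or (hpos : ∀ i, 0 < α i) (n : ℕ) {c c' : ℕ → Prop} (h : ∀ v, ¬(c v ∧ c' v)) :
    A α k k1 n (fun v => c v ∨ c' v) = A α k k1 n c + A α k k1 n c' := by
  unfold A
  rw [← Finset.sum_add_distrib]
  refine Finset.sum_congr rfl fun w _ => ?_
  by_cases h1 : c (phi k k1 n w) <;> by_cases h2 : c' (phi k k1 n w) <;>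
    simp [h1, h2] <;> exact absurd ⟨h1, h2⟩ (h _)

lemma A_mono (hpos : ∀ i, 0 < α i) (n : ℕ) {c c' : ℕ → Prop} (h : ∀ v, c v → c' v) :
    A α k k1 n c ≤ A α k k1 n c' := by
  unfold A
  refine Finset.sum_le_sum fun w _ => ?_
  by_cases h1 : c (phi k k1 n w)
  · rw [if_pos h1, if_pos (h _ h1)]
  · rw [if_neg h1]
    split_ifs
    · exact Finset.prod_nonneg fun t _ => (hpos _).le
    · exact le_refl 0

lemma A_vanish (n : ℕ) {c : ℕ → Prop} (h : ∀ v, v ≤ n → ¬ c v) : A α k k1 n c = 0 := by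
  unfold A
  refine Finset.sum_eq_zero fun w _ => ?_
  rw [if_neg (h _ (phi_le k k1 n w))]

lemma A_succ (hne : k1 ≠ k) (n : ℕ) (c : ℕ → Prop) :
    A α k k1 (n + 1) c =
      α k * A α k k1 n (fun v => c (v + 1)) + α k1 * A α k k1 n (fun v => c (v - 1)) +
      (∑ x ∈ (Finset.univ.erase k).erase k1, α x) * A α k k1 n c := by
  classical
  have hsnoc : A α k k1 (n + 1) c =
      ∑ x : Fin K, ∑ w : Fin n → Fin K,
        (if c (step k k1 x (phi k k1 n w)) then ∏ t, α (w t) else 0) * α x := by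
    unfold A
    rw [← Equiv.sum_comp (Fin.snocEquiv (fun _ => Fin K))
      (fun w => if c (phi k k1 (n+1) w) then ∏ t, α (w t) else 0), Fintype.sum_prod_type]
    refine Finset.sum_congr rfl fun x _ => Finset.sum_congr rfl fun w _ => ?_
    have h1 : (Fin.snocEquiv (fun _ => Fin K)) (x, w) = Fin.snoc w x := rfl
    rw [h1, phi_snoc]
    have h2 : (∏ t : Fin (n+1), α ((Fin.snoc w x : Fin (n+1) → Fin K) t))
        = (∏ t, α (w t)) * α x := by
      rw [Fin.prod_univ_castSucc]
      simp [Fin.snoc_castSucc, Fin.snoc_last]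
    rw [h2, ite_mul, zero_mul]
  rw [hsnoc]
  have hxA : ∀ x : Fin K,
      (∑ w : Fin n → Fin K,
        (if c (step k k1 x (phi k k1 n w)) then ∏ t, α (w t) else 0) * α x)
      = α x * A α k k1 n (fun v => c (step k k1 x v)) := by
    intro x
    rw [← Finset.sum_mul, mul_comm]
    rfl
  calc ∑ x : Fin K, ∑ w : Fin n → Fin K,
        (if c (step k k1 x (phi k k1 n w)) then ∏ t, α (w t) else 0) * α x
      = ∑ x : Fin K, α x * A α k k1 n (fun v => c (step k k1 x v)) := by
        exact Finset.sum_congr rfl fun x _ => hxA x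
    _ = α k * A α k k1 n (fun v => c (step k k1 k v))
        + ∑ x ∈ Finset.univ.erase k, α x * A α k k1 n (fun v => c (step k k1 x v)) :=
        (Finset.add_sum_erase _ _ (Finset.mem_univ k)).symm
    _ = α k * A α k k1 n (fun v => c (v + 1)) + α k1 * A α k k1 n (fun v => c (v - 1)) +
      (∑ x ∈ (Finset.univ.erase k).erase k1, α x) * A α k k1 n c := by
        have hk1mem : k1 ∈ Finset.univ.erase k := Finset.mem_erase.2 ⟨hne, Finset.mem_univ k1⟩
        rw [← Finset.add_sum_erase _ _ hk1mem]
        have e1 : (fun v => c (step k k1 k v)) = fun v => c (v + 1) := by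
          funext v; simp [step]
        have e2 : (fun v => c (step k k1 k1 v)) = fun v => c (v - 1) := by
          funext v; simp [step, hne]
        have e3 : ∀ x ∈ (Finset.univ.erase k).erase k1,
            α x * A α k k1 n (fun v => c (step k k1 x v)) = α x * A α k k1 n c := by
          intro x hx
          obtain ⟨hx1, hx2⟩ := Finset.mem_erase.1 hx
          obtain ⟨hx3, _⟩ := Finset.mem_erase.1 hx2
          have : (fun v => c (step k k1 x v)) = c := by
            funext v; simp [step, hx1, hx3]
          rw [this]
        rw [Finset.sum_congr rfl e3, ← Finset.sum_mul, e1, e2]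
        ring

lemma erase_sum (hsum : ∑ i, α i = 1) (hne : k1 ≠ k) :
    ∑ x ∈ (Finset.univ.erase k).erase k1, α x = 1 - α k - α k1 := by
  have h1 : α k + ∑ x ∈ Finset.univ.erase k, α x = ∑ x : Fin K, α x :=
    Finset.add_sum_erase _ _ (Finset.mem_univ k)
  have h2 : α k1 + ∑ x ∈ (Finset.univ.erase k).erase k1, α x = ∑ x ∈ Finset.univ.erase k, α x :=
    Finset.add_sum_erase _ _ (Finset.mem_erase.2 ⟨hne, Finset.mem_univ k1⟩)
  rw [hsum] at h1
  linarith

lemma A_true (hsum : ∑ i, α i = 1) (hne : k1 ≠ k) (n : ℕ) :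
    A α k k1 n (fun _ => True) = 1 := by
  induction n with
  | zero => rw [A_zero]; simp
  | succ n ih =>
    rw [A_succ hne, erase_sum hsum hne]
    have e : ∀ f : ℕ → ℕ, (fun v => (fun _ => True) (f v)) = (fun _ => True) := fun _ => rfl
    rw [e (· + 1), e (· - 1), ih]
    ring

lemma psi_eq (hpos : ∀ i, 0 < α i) (hk : (k1 : ℕ) + 1 = (k : ℕ))
    (ψ : ℕ → ℕ → ℝ)
    (hψ0 : ψ 0 0 = 1) (hψ0' : ∀ j, ψ 0 (j + 1) = 0)
    (hψrec0 : ∀ n, ψ (n + 1) 0 = ((1 - α k - α k1) + α k1) * ψ n 0 + α k1 * ψ n 1)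
    (hψrec : ∀ n j, ψ (n + 1) (j + 1) =
      α k * ψ n j + (1 - α k - α k1) * ψ n (j + 1) + α k1 * ψ n (j + 2))
    (hsum : ∑ i, α i = 1) :
    ∀ n j, ψ n j = A α k k1 n (fun v => v = j) := by
  have hne : k1 ≠ k := fun h => by rw [h] at hk; omega
  intro n
  induction n with
  | zero =>
    intro j
    rw [A_zero]
    cases j with
    | zero => simpa using hψ0
    | succ j => simpa using hψ0' j
  | succ n ih =>
    intro j
    rw [A_succ hne, erase_sum hsum hne]
    cases j with
    | zero =>
      have e1 : A α k k1 n (fun v => v + 1 = 0) = 0 :=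
        A_vanish n (fun v _ h => by omega)
      have e2 : A α k k1 n (fun v => v - 1 = 0) = A α k k1 n (fun v => v = 0 ∨ v = 1) :=
        A_congr n (fun v => by omega)
      have e3 : A α k k1 n (fun v => v = 0 ∨ v = 1)
          = A α k k1 n (fun v => v = 0) + A α k k1 n (fun v => v = 1) :=
        A_or hpos n (fun v => by omega)
      rw [e1, e2, e3, hψrec0 n, ih 0, ih 1]
      ring
    | succ j =>
      have e1 : A α k k1 n (fun v => v + 1 = j + 1) = A α k k1 n (fun v => v = j) :=
        A_congr n (fun v => by omega)
      have e2 : A α k k1 n (fun v => v - 1 = j + 1) = A α k k1 n (fun v => v = j + 2) :=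
        A_congr n (fun v => by omega)
      rw [e1, e2, hψrec n j, ih j, ih (j + 1), ih (j + 2)]
      ring

lemma A_tail_le (hpos : ∀ i, 0 < α i) (hk : (k1 : ℕ) + 1 = (k : ℕ))
    (hlt : α k < α k1) (hsum : ∑ i, α i = 1) :
    ∀ n m, A α k k1 n (fun v => m ≤ v) ≤ (α k / α k1) ^ m := by
  have hne : k1 ≠ k := fun h => by rw [h] at hk; omega
  set ρ := α k / α k1 with hρ
  have hρ0 : 0 ≤ ρ := div_nonneg (hpos k).le (hpos k1).le
  have hkey : α k1 * ρ = α k := by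
    rw [hρ, mul_div_cancel₀]
    exact (hpos k1).ne'
  have hβ0 : 0 ≤ 1 - α k - α k1 := by
    have h := erase_sum (α := α) hsum hne
    have : 0 ≤ ∑ x ∈ (Finset.univ.erase k).erase k1, α x :=
      Finset.sum_nonneg fun x _ => (hpos x).le
    linarith
  intro n
  induction n with
  | zero =>
    intro m
    rw [A_zero]
    cases m with
    | zero => simp
    | succ m =>
      rw [if_neg (by omega)]
      exact pow_nonneg hρ0 _
  | succ n ih =>
    intro m
    cases m with
    | zero =>
      have e : A α k k1 (n+1) (fun v => 0 ≤ v) = A α k k1 (n+1) (fun _ => True) :=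
        A_congr _ (fun v => by simp)
      rw [e, A_true hsum hne, pow_zero]
    | succ m =>
      rw [A_succ hne, erase_sum hsum hne]
      have e1 : A α k k1 n (fun v => m + 1 ≤ v + 1) = A α k k1 n (fun v => m ≤ v) :=
        A_congr n (fun v => by omega)
      have e2 : A α k k1 n (fun v => m + 1 ≤ v - 1) = A α k k1 n (fun v => m + 2 ≤ v) :=
        A_congr n (fun v => by omega)
      rw [e1, e2]
      have h1 := ih m
      have h2 := ih (m + 2)
      have h3 := ih (m + 1)
      have heq : α k * ρ ^ m + α k1 * ρ ^ (m + 2) + (1 - α k - α k1) * ρ ^ (m + 1)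
          = ρ ^ (m + 1) := by
        linear_combination (ρ ^ m * (ρ - 1)) * hkey
      nlinarith [hpos k, hpos k1, (hpos k).le, (hpos k1).le]

lemma measurable_restrictComp (n : ℕ) (g : (Fin n → Fin K) → ℕ) :
    Measurable (fun ω : ℕ → Fin K => g (fun t : Fin n => ω t)) :=
  (measurable_of_countable g).comp
    (measurable_pi_lambda _ (fun t => measurable_pi_apply (t : ℕ)))

variable {μ : Measure (ℕ → Fin K)}

lemma cyl_measure (hindep : iIndepFun (fun t (ω : ℕ → Fin K) => ω t) μ)
    (hdist : ∀ t i, μ {ω | ω t = i} = ENNReal.ofReal (α i))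
    (n : ℕ) (w : Fin n → Fin K) :
    μ {ω | ∀ t : Fin n, ω t = w t} = ∏ t : Fin n, ENNReal.ofReal (α (w t)) := by
  classical
  set s : ℕ → Set (ℕ → Fin K) :=
    fun t => (fun ω : ℕ → Fin K => ω t) ⁻¹' (if h : t < n then {w ⟨t, h⟩} else Set.univ) with hs
  have hmeas : ∀ t ∈ Finset.range n,
      MeasurableSet[MeasurableSpace.comap (fun ω : ℕ → Fin K => ω t) inferInstance] (s t) :=
    fun t _ => ⟨_, MeasurableSpace.measurableSet_top, rfl⟩
  have hset : (⋂ t ∈ Finset.range n, s t) = {ω | ∀ t : Fin n, ω t = w t} := by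
    ext ω
    simp only [Set.mem_iInter, Finset.mem_range, hs, Set.mem_preimage, Set.mem_setOf_eq]
    constructor
    · intro h t
      have := h t.1 t.2
      rw [dif_pos t.2] at this
      simpa using this
    · intro h t ht
      rw [dif_pos ht]
      exact Set.mem_singleton_iff.2 (h ⟨t, ht⟩)
  rw [← hset, hindep.meas_biInter hmeas]
  rw [← Fin.prod_univ_eq_prod_range (fun t => μ (s t)) n]
  refine Finset.prod_congr rfl fun t _ => ?_
  have : s (t : ℕ) = {ω : ℕ → Fin K | ω t = w t} := by
    rw [hs]
    simp only [dif_pos t.isLt]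
    ext ω
    simp
  rw [this, hdist]

lemma meas_tail (hpos : ∀ i, 0 < α i)
    (hindep : iIndepFun (fun t (ω : ℕ → Fin K) => ω t) μ)
    (hdist : ∀ t i, μ {ω | ω t = i} = ENNReal.ofReal (α i))
    (n m : ℕ) :
    μ {ω | m ≤ phi k k1 n (fun t : Fin n => ω t)}
      = ENNReal.ofReal (A α k k1 n (fun v => m ≤ v)) := by
  classical
  set S : Finset (Fin n → Fin K) := Finset.univ.filter (fun w => m ≤ phi k k1 n w) with hS
  have hset : {ω : ℕ → Fin K | m ≤ phi k k1 n (fun t : Fin n => ω t)}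
      = ⋃ w ∈ S, {ω : ℕ → Fin K | ∀ t : Fin n, ω t = w t} := by
    ext ω
    simp only [Set.mem_setOf_eq, Set.mem_iUnion, hS, Finset.mem_filter, Finset.mem_univ,
      true_and]
    constructor
    · intro h
      exact ⟨fun t => ω t, h, fun t => rfl⟩
    · rintro ⟨w, hw, hcyl⟩
      have : (fun t : Fin n => ω t) = w := funext hcyl
      rwa [this]
  have hdisj : (S : Set (Fin n → Fin K)).PairwiseDisjoint
      (fun w => {ω : ℕ → Fin K | ∀ t : Fin n, ω t = w t}) := by
    intro w _ w' _ hne'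
    refine Set.disjoint_left.2 fun ω h1 h2 => hne' ?_
    funext t
    rw [← h1 t, ← h2 t]
  have hmeas : ∀ w ∈ S, MeasurableSet {ω : ℕ → Fin K | ∀ t : Fin n, ω t = w t} := by
    intro w _
    have : {ω : ℕ → Fin K | ∀ t : Fin n, ω t = w t}
        = ⋂ t : Fin n, (fun ω : ℕ → Fin K => ω t) ⁻¹' {w t} := by
      ext ω; simp
    rw [this]
    exact MeasurableSet.iInter fun t =>
      (measurable_pi_apply (t : ℕ)) (MeasurableSpace.measurableSet_top)
  rw [hset, measure_biUnion_finset hdisj hmeas]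
  have hterm : ∀ w ∈ S, μ {ω : ℕ → Fin K | ∀ t : Fin n, ω t = w t}
      = ENNReal.ofReal (∏ t, α (w t)) := by
    intro w _
    rw [cyl_measure hindep hdist n w, ENNReal.ofReal_prod_of_nonneg]
    intro t _
    exact (hpos _).le
  rw [Finset.sum_congr rfl hterm, ← ENNReal.ofReal_sum_of_nonneg
    (fun w _ => Finset.prod_nonneg fun t _ => (hpos _).le)]
  congr 1
  rw [hS, Finset.sum_filter]
  unfold A
  exact Finset.sum_congr rfl fun w _ => by split_ifs <;> rfl

lemma rowInsert_length (x : Fin K) (r : List (Fin K)) :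
    (rowInsert x r).length ≤ r.length + 1 := by
  induction r with
  | nil => simp [rowInsert]
  | cons y ys ih =>
    rw [rowInsert]
    split_ifs <;> simp only [List.length_cons] <;> omega

lemma firstRow_length (l : List (Fin K)) : (firstRow l).length ≤ l.length := by
  have key : ∀ (l r : List (Fin K)),
      (l.foldl (fun r x => rowInsert x r) r).length ≤ r.length + l.length := by
    intro l
    induction l with
    | nil => intro r; simp
    | cons x l ih =>
      intro r
      simp only [List.foldl_cons, List.length_cons]
      have h1 := ih (rowInsert x r)
      have h2 := rowInsert_length x r
      omega
  simpa [firstRow] using key l ([] : List (Fin K))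

end Stmt14Aux

open Stmt14Aux

/-- For i.i.d. letters `x_0 < x_1 < ... < x_{K-1}` (all even) with strictly decreasing
probabilities `α`, the number `ξ k n` of letters `x k` in the first RSK row after `n`
insertions is stochastically dominated by the reflected walk `Ψ` with right-probability
`α k` and left-probability `α k1` (where `k1 + 1 = k`), whose distribution after `n` steps
is `ψ n`; hence `sup_n E[ξ k n] < ∞`. -/
theorem stmt14 (K : ℕ) (α : Fin K → ℝ) (hpos : ∀ i, 0 < α i)
    (hanti : ∀ i j : Fin K, i < j → α j < α i) (hsum : ∑ i, α i = 1)
    (k k1 : Fin K) (hk : (k1 : ℕ) + 1 = (k : ℕ))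
    (μ : Measure (ℕ → Fin K)) [IsProbabilityMeasure μ]
    (hindep : iIndepFun (fun t (ω : ℕ → Fin K) => ω t) μ)
    (hdist : ∀ t i, μ {ω | ω t = i} = ENNReal.ofReal (α i))
    (ξ : ℕ → (ℕ → Fin K) → ℕ)
    (hξ : ∀ n ω, ξ n ω = (firstRow (List.ofFn (fun t : Fin n => ω t))).count k)
    (ψ : ℕ → ℕ → ℝ)
    (hψ0 : ψ 0 0 = 1) (hψ0' : ∀ j, ψ 0 (j + 1) = 0)
    (hψrec0 : ∀ n, ψ (n + 1) 0 = ((1 - α k - α k1) + α k1) * ψ n 0 + α k1 * ψ n 1)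
    (hψrec : ∀ n j, ψ (n + 1) (j + 1) =
      α k * ψ n j + (1 - α k - α k1) * ψ n (j + 1) + α k1 * ψ n (j + 2)) :
    (∀ n m : ℕ, (μ {ω | m ≤ ξ n ω}).toReal ≤ ∑' j : ℕ, if m ≤ j then ψ n j else 0) ∧
    ∃ C : ℝ, ∀ n, ∫ ω, (ξ n ω : ℝ) ∂μ ≤ C := by
  have hne : k1 ≠ k := fun h => by rw [h] at hk; omega
  have hklt : k1 < k := Fin.lt_def.2 (by omega)
  have hlt : α k < α k1 := hanti k1 k hklt
  set ρ := α k / α k1 with hρ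
  have hρ0 : 0 ≤ ρ := div_nonneg (hpos k).le (hpos k1).le
  have hρ1 : ρ < 1 := (div_lt_one (hpos k1)).2 hlt
  have hψA := psi_eq hpos hk ψ hψ0 hψ0' hψrec0 hψrec hsum
  have htail := A_tail_le hpos hk hlt hsum
  have hdom : ∀ n m, {ω : ℕ → Fin K | m ≤ ξ n ω}
      ⊆ {ω : ℕ → Fin K | m ≤ phi k k1 n (fun t : Fin n => ω t)} := by
    intro n m ω hω
    simp only [Set.mem_setOf_eq] at hω ⊢
    calc m ≤ ξ n ω := hω
      _ = (firstRow (List.ofFn (fun t : Fin n => ω t))).count k := hξ n ω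
      _ ≤ phi k k1 n (fun t : Fin n => ω t) := count_firstRow_le_phi hk n _
  have hμtail : ∀ n m, (μ {ω | m ≤ ξ n ω}).toReal ≤ A α k k1 n (fun v => m ≤ v) := by
    intro n m
    have h1 : μ {ω | m ≤ ξ n ω}
        ≤ μ {ω : ℕ → Fin K | m ≤ phi k k1 n (fun t : Fin n => ω t)} :=
      measure_mono (hdom n m)
    rw [meas_tail hpos hindep hdist n m] at h1
    calc (μ {ω | m ≤ ξ n ω}).toReal
        ≤ (ENNReal.ofReal (A α k k1 n (fun v => m ≤ v))).toReal :=
          ENNReal.toReal_mono ENNReal.ofReal_ne_top h1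
      _ = A α k k1 n (fun v => m ≤ v) := ENNReal.toReal_ofReal (A_nonneg hpos n _)
  constructor
  · intro n m
    have hzero : ∀ j ∉ Finset.range (n + 1), (if m ≤ j then ψ n j else 0) = 0 := by
      intro j hj
      rw [Finset.mem_range, not_lt] at hj
      rw [hψA n j, A_vanish n (fun v hv hvj => by omega)]
      simp
    have hswap : ∑ j ∈ Finset.range (n + 1),
        (if m ≤ j then A α k k1 n (fun v => v = j) else 0)
        = A α k k1 n (fun v => m ≤ v) := by
      have step1 : ∀ j : ℕ, (if m ≤ j then A α k k1 n (fun v => v = j) else 0)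
          = ∑ w : Fin n → Fin K,
              (if m ≤ j ∧ phi k k1 n w = j then ∏ t, α (w t) else 0) := by
        intro j
        simp only [A]
        split_ifs with h
        · refine Finset.sum_congr rfl fun w _ => ?_
          split_ifs <;> tauto
        · symm
          refine Finset.sum_eq_zero fun w _ => ?_
          exact if_neg fun hc => h hc.1
      rw [Finset.sum_congr rfl (fun j _ => step1 j), Finset.sum_comm]
      simp only [A]
      refine Finset.sum_congr rfl fun w _ => ?_
      rw [Finset.sum_eq_single (phi k k1 n w)]
      · split_ifs <;> tauto
      · intro j _ hj
        exact if_neg fun hc => hj hc.2.symm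
      · intro hnot
        exact absurd (Finset.mem_range.2 (Nat.lt_succ_of_le (phi_le k k1 n w))) hnot
    have htsum : (∑' j : ℕ, if m ≤ j then ψ n j else 0) = A α k k1 n (fun v => m ≤ v) := by
      rw [tsum_eq_sum hzero, ← hswap]
      refine Finset.sum_congr rfl fun j _ => ?_
      rw [hψA n j]
    rw [htsum]
    exact hμtail n m
  · refine ⟨(1 - ρ)⁻¹, fun n => ?_⟩
    have hξle : ∀ ω, ξ n ω ≤ n := by
      intro ω
      rw [hξ n ω]
      calc (firstRow (List.ofFn (fun t : Fin n => ω t))).count k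
          ≤ (firstRow (List.ofFn (fun t : Fin n => ω t))).length := List.count_le_length
        _ ≤ (List.ofFn (fun t : Fin n => ω t)).length := firstRow_length _
        _ = n := by simp
    have hmeasξ : Measurable (fun ω => ξ n ω) := by
      have he : (fun ω : ℕ → Fin K => ξ n ω)
          = fun ω => (fun w : Fin n → Fin K => (firstRow (List.ofFn w)).count k)
              (fun t : Fin n => ω t) := by
        funext ω; exact hξ n ω
      rw [he]
      exact measurable_restrictComp n (fun w => (firstRow (List.ofFn w)).count k)
    have hmeasset : ∀ m : ℕ, MeasurableSet {ω : ℕ → Fin K | m ≤ ξ n ω} := by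
      intro m
      exact hmeasξ (MeasurableSpace.measurableSet_top)
    have hrepr : ∀ ω, ((ξ n ω : ℝ))
        = ∑ m ∈ Finset.Icc 1 n, Set.indicator {ω' : ℕ → Fin K | m ≤ ξ n ω'}
            (fun _ => (1 : ℝ)) ω := by
      intro ω
      have h1 : ∀ m ∈ Finset.Icc 1 n, Set.indicator {ω' : ℕ → Fin K | m ≤ ξ n ω'}
          (fun _ => (1 : ℝ)) ω = if m ≤ ξ n ω then (1 : ℝ) else 0 := by
        intro m _
        rw [Set.indicator_apply]
        rfl
      rw [Finset.sum_congr rfl h1, Finset.sum_boole]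
      have h2 : (Finset.Icc 1 n).filter (fun m => m ≤ ξ n ω) = Finset.Icc 1 (ξ n ω) := by
        ext j
        simp only [Finset.mem_filter, Finset.mem_Icc]
        have := hξle ω
        omega
      rw [h2, Nat.card_Icc]
      simp
    have hint : ∫ ω, (ξ n ω : ℝ) ∂μ
        = ∑ m ∈ Finset.Icc 1 n, (μ {ω : ℕ → Fin K | m ≤ ξ n ω}).toReal := by
      calc ∫ ω, (ξ n ω : ℝ) ∂μ
          = ∫ ω, (∑ m ∈ Finset.Icc 1 n, Set.indicator {ω' : ℕ → Fin K | m ≤ ξ n ω'}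
              (fun _ => (1 : ℝ)) ω) ∂μ := by
            congr 1
            funext ω
            exact hrepr ω
        _ = ∑ m ∈ Finset.Icc 1 n, ∫ ω, Set.indicator {ω' : ℕ → Fin K | m ≤ ξ n ω'}
              (fun _ => (1 : ℝ)) ω ∂μ := by
            refine integral_finset_sum _ fun m _ => ?_
            exact (integrable_const (1 : ℝ)).indicator (hmeasset m)
        _ = ∑ m ∈ Finset.Icc 1 n, (μ {ω : ℕ → Fin K | m ≤ ξ n ω}).toReal := by
            refine Finset.sum_congr rfl fun m _ => ?_
            rw [integral_indicator_const (1 : ℝ) (hmeasset m)]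
            simp
            rfl
    rw [hint]
    calc ∑ m ∈ Finset.Icc 1 n, (μ {ω : ℕ → Fin K | m ≤ ξ n ω}).toReal
        ≤ ∑ m ∈ Finset.Icc 1 n, ρ ^ m :=
          Finset.sum_le_sum fun m _ => le_trans (hμtail n m) (htail n m)
      _ ≤ ∑' m : ℕ, ρ ^ m := Summable.sum_le_tsum _ (fun m _ => pow_nonneg hρ0 m)
          (summable_geometric_of_lt_one hρ0 hρ1)
      _ = (1 - ρ)⁻¹ := tsum_geometric_of_lt_one hρ0 hρ1
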